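/- arXiv:2001.09950 — 3 statements merged into one kernel-verified Lean document; each statement's English description precedes it below -/
import Mathlib

section
/- Let V be a finite nonempty subset of X × Y and let q = (q_x, q_y) ∈ X × Y be a query point. Let ṽ ∈ V be a point whose first component is nearest to q_x in X, i.e. d_X(q_x, ṽ₁) = min_{v ∈ V} d_X(q_x, v₁); write D_r = d_X(q_x, ṽ₁) and D_f = √(D_r² + λ·D_b²). Then every v ∈ V with d_f(q, v) ≤ d_f(q, ṽ) satisfies d_X(q_x, v₁) ≤ D_f. In other words, any element of V at least as close to q as ṽ in the full-space metric is contained in the robot-space ball of radius D_f about q_x. -/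
/-- Any element of `V` at least as close to `q` as the robot-space nearest neighbor `vt`
(under the full-space metric) lies in the robot-space ball of radius `D_f` about `q.1`. -/
theorem candidates_in_radius {X Y : Type*} [MetricSpace X] [MetricSpace Y]
    (l : ℝ) (hl : 0 < l) (Db : ℝ) (hDb : 0 ≤ Db)
    (hbound : ∀ y y' : Y, dist y y' ≤ Db)
    (df : X × Y → X × Y → ℝ)
    (hdf : ∀ p q, df p q = Real.sqrt (dist p.1 q.1 ^ 2 + l * dist p.2 q.2 ^ 2))
    (V : Finset (X × Y)) (hV : V.Nonempty)
    (q : X × Y) (vt : X × Y) (hvt : vt ∈ V)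
    (hmin : ∀ v ∈ V, dist q.1 vt.1 ≤ dist q.1 v.1)
    (Dr Df : ℝ) (hDr : Dr = dist q.1 vt.1)
    (hDf : Df = Real.sqrt (Dr ^ 2 + l * Db ^ 2)) :
    ∀ v ∈ V, df q v ≤ df q vt → dist q.1 v.1 ≤ Df := by
  intro v hv hle
  have h1 : dist q.1 v.1 ≤ df q v := by
    rw [hdf]
    rw [Real.le_sqrt dist_nonneg]
    · nlinarith [mul_nonneg hl.le (sq_nonneg (dist q.2 v.2))]
    · positivity
  have h2 : df q vt ≤ Df := by
    rw [hdf, hDf, hDr]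
    apply Real.sqrt_le_sqrt
    have hb := hbound q.2 vt.2
    nlinarith [mul_le_mul_of_nonneg_left (pow_le_pow_left₀ dist_nonneg hb 2) hl.le]
  linarith
end

section
/- Let V be a finite nonempty subset of X × Y and let q = (q_x, q_y) ∈ X × Y be a query point. Let ṽ ∈ V satisfy d_X(q_x, ṽ₁) = min_{v ∈ V} d_X(q_x, v₁), and set D_f = √(d_X(q_x, ṽ₁)² + λ·D_b²). Let Q = {v ∈ V : d_X(q_x, v₁) ≤ D_f} be the result of a robot-space radius query of radius D_f. Then Q is nonempty and min_{v ∈ Q} d_f(q, v) = min_{v ∈ V} d_f(q, v); consequently, any minimizer of d_f(q, ·) over Q is a nearest neighbor of q in V under the full-space metric d_f. That is, the two-stage nearest-neighbor search (first in robot space, then a radius query refined in full space) is equivalent to a nearest-neighbor search in the full configuration space. -/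
/-- The two-stage nearest-neighbor search (robot-space nearest neighbor, then a radius
query refined in full space) is equivalent to a nearest-neighbor search in the full
configuration space. (Paper's Lemma 2.) -/
theorem two_stage_nn_equivalent {X Y : Type*} [MetricSpace X] [MetricSpace Y]
    (l : ℝ) (hl : 0 < l) (Db : ℝ) (hDb : 0 ≤ Db)
    (hbound : ∀ y y' : Y, dist y y' ≤ Db)
    (df : X × Y → X × Y → ℝ)
    (hdf : ∀ p q, df p q = Real.sqrt (dist p.1 q.1 ^ 2 + l * dist p.2 q.2 ^ 2))
    (V : Finset (X × Y)) (hV : V.Nonempty)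
    (q : X × Y) (vt : X × Y) (hvt : vt ∈ V)
    (hmin : ∀ v ∈ V, dist q.1 vt.1 ≤ dist q.1 v.1)
    (Df : ℝ) (hDf : Df = Real.sqrt (dist q.1 vt.1 ^ 2 + l * Db ^ 2))
    (Q : Finset (X × Y))
    (hQ : ∀ v, v ∈ Q ↔ v ∈ V ∧ dist q.1 v.1 ≤ Df) :
    ∃ hQne : Q.Nonempty,
      Q.inf' hQne (df q) = V.inf' hV (df q) ∧
      ∀ v ∈ Q, (∀ w ∈ Q, df q v ≤ df q w) → ∀ w ∈ V, df q v ≤ df q w := by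
  have hdvt : dist q.1 vt.1 ≤ Df := by
    rw [hDf]
    calc dist q.1 vt.1 = Real.sqrt (dist q.1 vt.1 ^ 2) := by
          rw [Real.sqrt_sq dist_nonneg]
      _ ≤ _ := Real.sqrt_le_sqrt (by nlinarith [@dist_nonneg X _ q.1 vt.1])
  have hvtQ : vt ∈ Q := (hQ vt).2 ⟨hvt, hdvt⟩
  have hQne : Q.Nonempty := ⟨vt, hvtQ⟩
  have hQsub : Q ⊆ V := fun v hv => ((hQ v).1 hv).1
  -- df q vt ≤ Df
  have hdfvt : df q vt ≤ Df := by
    rw [hdf, hDf]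
    apply Real.sqrt_le_sqrt
    have := hbound q.2 vt.2
    nlinarith [mul_le_mul_of_nonneg_left (pow_le_pow_left₀ dist_nonneg this 2) hl.le]
  -- for any v, dist q.1 v.1 ≤ df q v
  have hlow : ∀ v : X × Y, dist q.1 v.1 ≤ df q v := by
    intro v
    rw [hdf]
    calc dist q.1 v.1 = Real.sqrt (dist q.1 v.1 ^ 2) := by rw [Real.sqrt_sq dist_nonneg]
      _ ≤ _ := Real.sqrt_le_sqrt (by nlinarith [@dist_nonneg Y _ q.2 v.2])
  have key : ∀ v ∈ V, Q.inf' hQne (df q) ≤ df q v := by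
    intro v hv
    by_cases hvQ : v ∈ Q
    · exact Finset.inf'_le _ hvQ
    · have : ¬ dist q.1 v.1 ≤ Df := fun h => hvQ ((hQ v).2 ⟨hv, h⟩)
      push_neg at this
      calc Q.inf' hQne (df q) ≤ df q vt := Finset.inf'_le _ hvtQ
        _ ≤ Df := hdfvt
        _ ≤ dist q.1 v.1 := le_of_lt this
        _ ≤ df q v := hlow v
  have heq : Q.inf' hQne (df q) = V.inf' hV (df q) := by
    apply le_antisymm
    · exact (Finset.le_inf'_iff _ _).2 key
    · exact (Finset.le_inf'_iff _ _).2 fun v hv => Finset.inf'_le _ (hQsub hv)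
  refine ⟨hQne, heq, fun v hvQ hminQ w hw => ?_⟩
  calc df q v ≤ Q.inf' hQne (df q) := (Finset.le_inf'_iff _ _).2 hminQ
    _ ≤ df q w := key w hw
end

section
/- Let K ≥ 1, let γ_1, …, γ_K ∈ (0,1], and let a : {0,…,K} × ℕ → ℝ satisfy: (i) 0 ≤ a(k,n) ≤ 1 for all k, n; (ii) a(0,n) = 1 for all n; and (iii) for every k ∈ {1,…,K} and every n ≥ 1, 1 − a(k,n) ≤ ∏_{i=1}^{n} (1 − γ_k · a(k−1, i−1)). Then for every k ∈ {1,…,K}, lim_{n→∞} a(k,n) = 1; in particular lim_{n→∞} a(K,n) = 1. -/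
/-- Abstract form of probabilistic completeness (Section 6.2): if `a k n` satisfies the
recursive product bound `1 − a(k,n) ≤ ∏_{i=1}^n (1 − γ_k · a(k−1, i−1))` with
`a(0,n) = 1`, then `a(k,n) → 1` as `n → ∞` for every `1 ≤ k ≤ K`. -/
theorem planner_probabilistically_complete (K : ℕ) (hK : 1 ≤ K)
    (γ : ℕ → ℝ) (hγ : ∀ k, 1 ≤ k → k ≤ K → 0 < γ k ∧ γ k ≤ 1)
    (a : ℕ → ℕ → ℝ)
    (hbound : ∀ k n, k ≤ K → 0 ≤ a k n ∧ a k n ≤ 1)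
    (hzero : ∀ n, a 0 n = 1)
    (hrec : ∀ k, 1 ≤ k → k ≤ K → ∀ n, 1 ≤ n →
      1 - a k n ≤ ∏ i ∈ Finset.Icc 1 n, (1 - γ k * a (k - 1) (i - 1))) :
    ∀ k, 1 ≤ k → k ≤ K →
      Filter.Tendsto (fun n => a k n) Filter.atTop (nhds 1) := by
  suffices h : ∀ k, k ≤ K → Filter.Tendsto (fun n => a k n) Filter.atTop (nhds 1) by
    intro k _ hkK; exact h k hkK
  intro k
  induction k with
  | zero => intro _; simpa [hzero] using (tendsto_const_nhds : Filter.Tendsto (fun _ : ℕ => (1:ℝ)) Filter.atTop (nhds 1))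
  | succ k ih =>
    intro hkK
    have hk1 : 1 ≤ k + 1 := Nat.succ_le_succ (Nat.zero_le k)
    have ihk := ih (Nat.le_of_succ_le hkK)
    obtain ⟨hγ0, hγ1⟩ := hγ (k+1) hk1 hkK
    -- eventually a k m ≥ 1/2
    have hev : ∀ᶠ m in Filter.atTop, (1/2 : ℝ) < a k m :=
      ihk.eventually (eventually_gt_nhds (by norm_num))
    obtain ⟨N, hN⟩ := Filter.eventually_atTop.mp hev
    set f : ℕ → ℝ := fun i => 1 - γ (k+1) * a k (i-1) with hf
    set c : ℝ := 1 - γ (k+1) / 2 with hc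
    have hc0 : 0 ≤ c := by simp only [hc]; linarith
    have hc1 : c < 1 := by simp only [hc]; linarith
    have hab : ∀ m, 0 ≤ a k m ∧ a k m ≤ 1 := fun m => hbound k m (Nat.le_of_succ_le hkK)
    have hf0 : ∀ i, 0 ≤ f i := by
      intro i
      have := (hab (i-1)).2
      have h1 : γ (k+1) * a k (i-1) ≤ 1 * 1 :=
        mul_le_mul hγ1 this (hab (i-1)).1 zero_le_one
      simp only [hf]; linarith
    have hf1 : ∀ i, f i ≤ 1 := by
      intro i
      have := mul_nonneg hγ0.le (hab (i-1)).1
      simp only [hf]; linarith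
    have hfc : ∀ i, N + 1 ≤ i → f i ≤ c := by
      intro i hi
      have hai : (1/2 : ℝ) ≤ a k (i-1) := (hN (i-1) (by omega)).le
      have : γ (k+1) * (1/2) ≤ γ (k+1) * a k (i-1) :=
        mul_le_mul_of_nonneg_left hai hγ0.le
      simp only [hf, hc]; linarith
    -- key bound: product ≤ c^(n-N) for n ≥ N
    have hkey : ∀ n, N ≤ n → ∏ i ∈ Finset.Icc 1 n, f i ≤ c ^ (n - N) := by
      intro n hn
      induction n, hn using Nat.le_induction with
      | base =>
        simpa using Finset.prod_le_one (fun i _ => hf0 i) (fun i _ => hf1 i)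
      | succ n hn ihn =>
        have hstep : ∏ i ∈ Finset.Icc 1 (n+1), f i = (∏ i ∈ Finset.Icc 1 n, f i) * f (n+1) := by
          rw [← Finset.prod_Icc_succ_top (by omega : 1 ≤ n + 1)]
        rw [hstep]
        have hprodnn : 0 ≤ ∏ i ∈ Finset.Icc 1 n, f i :=
          Finset.prod_nonneg (fun i _ => hf0 i)
        have h1 : (∏ i ∈ Finset.Icc 1 n, f i) * f (n+1) ≤ c ^ (n - N) * c := by
          apply mul_le_mul ihn (hfc (n+1) (by omega)) (hf0 _) (pow_nonneg hc0 _)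
        have : c ^ (n - N) * c = c ^ (n + 1 - N) := by
          rw [← pow_succ]
          congr 1
          omega
        linarith [h1, this ▸ h1]
    -- the product tends to 0
    have hpow : Filter.Tendsto (fun n : ℕ => c ^ (n - N)) Filter.atTop (nhds 0) :=
      (tendsto_pow_atTop_nhds_zero_of_lt_one hc0 hc1).comp
        (Filter.tendsto_sub_atTop_nat N)
    have hprod0 : Filter.Tendsto (fun n => ∏ i ∈ Finset.Icc 1 n, f i) Filter.atTop (nhds 0) := by
      apply tendsto_of_tendsto_of_tendsto_of_le_of_le' tendsto_const_nhds hpow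
      · exact Filter.Eventually.of_forall (fun n => Finset.prod_nonneg (fun i _ => hf0 i))
      · exact Filter.eventually_atTop.mpr ⟨N, hkey⟩
    -- squeeze
    have hlow : Filter.Tendsto (fun n => 1 - ∏ i ∈ Finset.Icc 1 n, f i) Filter.atTop (nhds 1) := by
      simpa using tendsto_const_nhds.sub hprod0
    apply tendsto_of_tendsto_of_tendsto_of_le_of_le' hlow tendsto_const_nhds
    · refine Filter.eventually_atTop.mpr ⟨1, fun n hn => ?_⟩
      have := hrec (k+1) hk1 hkK n hn
      simp only [Nat.add_sub_cancel] at this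
      simp only [hf]
      linarith
    · exact Filter.Eventually.of_forall (fun n => (hbound (k+1) n hkK).2)
end
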